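/- Let k be a field, let V₃ = {0,1}³ with Hamming distance d, and let ML_{Cu₃} be the quotient of the free metabelian Lie algebra L₍₂₎(V₃) over k by the Lie ideal generated by all brackets ⁅ε,δ⁆ with d(ε,δ) = 1. Then for all δ₁, δ₂, γ, μ, μ' ∈ V₃ with d(δ₁,δ₂) = 2, d(γ,δ₁) = 1, d(γ,δ₂) = 3, d(μ,γ) = 1, d(μ,δ₂) = 2, d(μ',μ) = 1, d(μ',δ₂) = 1 and d(μ,δ₁) ≠ 1, the image in ML_{Cu₃} of the left-normed bracket [⁅δ₁,δ₂⁆, γ, μ, μ'] is zero. -/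

import Mathlib

/-- The free metabelian Lie algebra on `X` over `k`. -/
abbrev FreeMetabelianLieAlgebra (k : Type u) [Field k] (X : Type v) :=
  FreeLieAlgebra k X ⧸ LieAlgebra.derivedSeries k (FreeLieAlgebra k X) 2

/-- The image of a generator `x ∈ X` in the free metabelian Lie algebra. -/
noncomputable def FreeMetabelianLieAlgebra.of (k : Type u) [Field k] {X : Type v} (x : X) :
    FreeMetabelianLieAlgebra k X :=
  LieSubmodule.Quotient.mk (N := LieAlgebra.derivedSeries k (FreeLieAlgebra k X) 2)
    (FreeLieAlgebra.of k x)


/-- The Lie ideal of `L₍₂₎({0,1}³)` generated by the brackets of pairs of vertices of the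
3-cube at Hamming distance 1. -/
noncomputable def cubeIdeal (k : Type u) [Field k] :
    LieIdeal k (FreeMetabelianLieAlgebra k (Fin 3 → Bool)) :=
  LieSubmodule.lieSpan k (FreeMetabelianLieAlgebra k (Fin 3 → Bool))
    {x | ∃ ε δ : Fin 3 → Bool, hammingDist ε δ = 1 ∧
      x = ⁅FreeMetabelianLieAlgebra.of k ε, FreeMetabelianLieAlgebra.of k δ⁆}

/-- The metabelian identity in the free metabelian Lie algebra. -/
lemma meta_ML (k : Type u) [Field k] (X : Type v)
    (a b c d : FreeMetabelianLieAlgebra k X) : ⁅⁅a,b⁆,⁅c,d⁆⁆ = 0 := by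
  obtain ⟨a', rfl⟩ := LieSubmodule.Quotient.surjective_mk' _ a
  obtain ⟨b', rfl⟩ := LieSubmodule.Quotient.surjective_mk' _ b
  obtain ⟨c', rfl⟩ := LieSubmodule.Quotient.surjective_mk' _ c
  obtain ⟨d', rfl⟩ := LieSubmodule.Quotient.surjective_mk' _ d
  have h1 : ∀ x y : FreeLieAlgebra k X,
      ⁅x, y⁆ ∈ LieAlgebra.derivedSeries k (FreeLieAlgebra k X) 1 := by
    intro x y
    rw [LieAlgebra.derivedSeries_def, LieAlgebra.derivedSeriesOfIdeal_succ,
      LieAlgebra.derivedSeriesOfIdeal_zero]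
    exact LieSubmodule.lie_mem_lie (LieSubmodule.mem_top _) (LieSubmodule.mem_top _)
  have h2 : ⁅⁅a',b'⁆,⁅c',d'⁆⁆ ∈ LieAlgebra.derivedSeries k (FreeLieAlgebra k X) 2 := by
    rw [LieAlgebra.derivedSeries_def, LieAlgebra.derivedSeriesOfIdeal_succ]
    exact LieSubmodule.lie_mem_lie (h1 a' b') (h1 c' d')
  have : (LieSubmodule.Quotient.mk' (LieAlgebra.derivedSeries k (FreeLieAlgebra k X) 2))
      ⁅⁅a',b'⁆,⁅c',d'⁆⁆ = 0 := by
    rw [LieSubmodule.Quotient.mk'_apply, LieSubmodule.Quotient.mk_eq_zero']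
    exact h2
  simpa using this

/-- In the partial commutative metabelian Lie algebra of the 3-cube, the image of the
left-normed bracket `[⁅δ₁,δ₂⁆, γ, μ, μ']` is zero whenever `d(δ₁,δ₂) = 2`, `d(γ,δ₁) = 1`,
`d(γ,δ₂) = 3`, `d(μ,γ) = 1`, `d(μ,δ₂) = 2`, `d(μ',μ) = 1`, `d(μ',δ₂) = 1` and
`d(μ,δ₁) ≠ 1`. -/

theorem cube_relation_R5' (k : Type u) [Field k] (δ₁ δ₂ γ μ μ' : Fin 3 → Bool)
    (h1 : hammingDist δ₁ δ₂ = 2)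
    (h2 : hammingDist γ δ₁ = 1) (h3 : hammingDist γ δ₂ = 3)
    (h4 : hammingDist μ γ = 1) (h5 : hammingDist μ δ₂ = 2)
    (h6 : hammingDist μ' μ = 1) (h7 : hammingDist μ' δ₂ = 1)
    (h8 : hammingDist μ δ₁ ≠ 1) :
    LieSubmodule.Quotient.mk (N := cubeIdeal k)
        ⁅⁅⁅⁅FreeMetabelianLieAlgebra.of k δ₁, FreeMetabelianLieAlgebra.of k δ₂⁆,
              FreeMetabelianLieAlgebra.of k γ⁆, FreeMetabelianLieAlgebra.of k μ⁆,
          FreeMetabelianLieAlgebra.of k μ'⁆ = 0 := by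
  set Q := FreeMetabelianLieAlgebra k (Fin 3 → Bool) ⧸ cubeIdeal k with hQ
  let E : (Fin 3 → Bool) → Q := fun v =>
    LieSubmodule.Quotient.mk (N := cubeIdeal k) (FreeMetabelianLieAlgebra.of k v)
  -- generator relations in Q
  have rel : ∀ ε δ : Fin 3 → Bool, hammingDist ε δ = 1 → ⁅E ε, E δ⁆ = 0 := by
    intro ε δ h
    show ⁅E ε, E δ⁆ = 0
    rw [show ⁅E ε, E δ⁆ = LieSubmodule.Quotient.mk (N := cubeIdeal k)
        ⁅FreeMetabelianLieAlgebra.of k ε, FreeMetabelianLieAlgebra.of k δ⁆ from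
      (LieSubmodule.Quotient.mk_bracket (I := cubeIdeal k) _ _).symm]
    rw [LieSubmodule.Quotient.mk_eq_zero']
    exact LieSubmodule.subset_lieSpan ⟨ε, δ, h, rfl⟩
  -- metabelian identity in Q
  have hmeta : ∀ a b c d : Q, ⁅⁅a,b⁆,⁅c,d⁆⁆ = 0 := by
    intro a b c d
    obtain ⟨a', rfl⟩ := LieSubmodule.Quotient.surjective_mk' _ a
    obtain ⟨b', rfl⟩ := LieSubmodule.Quotient.surjective_mk' _ b
    obtain ⟨c', rfl⟩ := LieSubmodule.Quotient.surjective_mk' _ c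
    obtain ⟨d', rfl⟩ := LieSubmodule.Quotient.surjective_mk' _ d
    have := congrArg (LieSubmodule.Quotient.mk' (cubeIdeal k)) (meta_ML k _ a' b' c' d')
    rw [map_zero, LieSubmodule.Quotient.mk'_apply, LieSubmodule.Quotient.mk_bracket,
      LieSubmodule.Quotient.mk_bracket, LieSubmodule.Quotient.mk_bracket] at this
    exact this
  -- tail swap for a bracket head
  have swap : ∀ a b x y : Q, ⁅⁅⁅a,b⁆,x⁆,y⁆ = ⁅⁅⁅a,b⁆,y⁆,x⁆ := by
    intro a b x y
    have hl := leibniz_lie ⁅a,b⁆ x y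
    rw [hmeta a b x y, (lie_skew x ⁅⁅a,b⁆,y⁆).symm, ← sub_eq_add_neg] at hl
    exact sub_eq_zero.mp hl.symm
  -- swap within the head when the last bracket vanishes:
  have swap0 : ∀ x y z : Q, ⁅y, z⁆ = 0 → ⁅⁅x,y⁆,z⁆ = ⁅⁅x,z⁆,y⁆ := by
    intro x y z h
    have e := leibniz_lie x y z
    rw [h, lie_zero] at e
    have e2 : ⁅⁅x,y⁆,z⁆ = -⁅y,⁅x,z⁆⁆ := by
      rw [eq_comm, neg_eq_iff_add_eq_zero, add_comm, ← e]
    rw [e2]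
    exact lie_skew ⁅x,z⁆ y
  -- head reversal when the outer element commutes with the first:
  have headsw : ∀ x y z : Q, ⁅z, x⁆ = 0 → ⁅⁅x,y⁆,z⁆ = ⁅⁅z,y⁆,x⁆ := by
    intro x y z h
    have e1 := leibniz_lie z x y
    rw [h, zero_lie, zero_add] at e1
    calc ⁅⁅x,y⁆,z⁆ = -⁅z,⁅x,y⁆⁆ := (lie_skew ⁅x,y⁆ z).symm
      _ = -⁅x,⁅z,y⁆⁆ := by rw [e1]
      _ = ⁅⁅z,y⁆,x⁆ := lie_skew ⁅z,y⁆ x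
  -- rewrite the goal in terms of E
  rw [LieSubmodule.Quotient.mk_bracket (I := cubeIdeal k),
    LieSubmodule.Quotient.mk_bracket (I := cubeIdeal k),
    LieSubmodule.Quotient.mk_bracket (I := cubeIdeal k),
    LieSubmodule.Quotient.mk_bracket (I := cubeIdeal k)]
  show ⁅⁅⁅⁅E δ₁, E δ₂⁆, E γ⁆, E μ⁆, E μ'⁆ = 0
  rw [headsw (E δ₁) (E δ₂) (E γ) (rel γ δ₁ h2)]
  rw [swap ⁅E γ, E δ₂⁆ (E δ₁) (E μ) (E μ')]
  rw [swap (E γ) (E δ₂) (E δ₁) (E μ')]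
  rw [swap0 (E γ) (E δ₂) (E μ') (rel δ₂ μ' (by rwa [hammingDist_comm]))]
  rw [swap ⁅E γ, E μ'⁆ (E δ₂) (E δ₁) (E μ)]
  rw [swap (E γ) (E μ') (E δ₂) (E μ)]
  have s4 : ⁅⁅E γ, E μ'⁆, E μ⁆ = 0 := by
    have e := leibniz_lie (E γ) (E μ') (E μ)
    rw [rel μ' μ h6, lie_zero, rel γ μ (by rwa [hammingDist_comm]), lie_zero, add_zero] at e
    exact e.symm
  rw [s4, zero_lie, zero_lie]
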